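/- For all real v ≠ 0, |sin(2v)/2 - sin²(v)/v| ≤ 4/5. -/

import Mathlib

open Real
lemma mono_aux {f f' : ℝ → ℝ} (hf : ∀ x, HasDerivAt f (f' x) x)
    (h0 : ∀ x, 0 < x → 0 ≤ f' x) (hf0 : f 0 = 0) {x : ℝ} (hx : 0 ≤ x) : 0 ≤ f x := by
  have hm : MonotoneOn f (Set.Ici 0) := by
    apply monotoneOn_of_deriv_nonneg (convex_Ici 0)
    · exact fun y _ => (hf y).continuousAt.continuousWithinAt
    · intro y hy; exact (hf y).differentiableAt.differentiableWithinAt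
    · intro y hy
      rw [(hf y).deriv]
      exact h0 y (by simpa using hy)
  have := hm Set.self_mem_Ici hx hx
  rwa [hf0] at this

lemma sin_lb3 {x : ℝ} (hx : 0 ≤ x) : x - x^3/6 ≤ Real.sin x := by
  have h := mono_aux (f := fun x => Real.sin x - (x - x^3/6))
    (f' := fun x => Real.cos x - (1 - x^2/2)) ?_ ?_ (by norm_num) hx
  · linarith
  · intro y
    have h1 := (Real.hasDerivAt_sin y).sub ((hasDerivAt_id y).sub ((hasDerivAt_pow 3 y).div_const 6))
    refine h1.congr_deriv ?_
    simp
    ring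
  · intro y hy
    have hb := Real.one_sub_sq_div_two_le_cos (x := y)
    nlinarith [hy.le]

lemma cos_ub4 {x : ℝ} (hx : 0 ≤ x) : Real.cos x ≤ 1 - x^2/2 + x^4/24 := by
  have h := mono_aux (f := fun x => (1 - x^2/2 + x^4/24) - Real.cos x)
    (f' := fun x => Real.sin x - (x - x^3/6)) ?_ ?_ (by norm_num) hx
  · linarith
  · intro y
    have h1 := (((hasDerivAt_const y (1:ℝ)).sub ((hasDerivAt_pow 2 y).div_const 2)).add ((hasDerivAt_pow 4 y).div_const 24)).sub (Real.hasDerivAt_cos y)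
    refine h1.congr_deriv ?_
    simp
    ring
  · intro y hy
    have hb := sin_lb3 (le_of_lt hy)
    nlinarith [hy.le]

lemma sin_ub5 {x : ℝ} (hx : 0 ≤ x) : Real.sin x ≤ x - x^3/6 + x^5/120 := by
  have h := mono_aux (f := fun x => (x - x^3/6 + x^5/120) - Real.sin x)
    (f' := fun x => (1 - x^2/2 + x^4/24) - Real.cos x) ?_ ?_ (by norm_num) hx
  · linarith
  · intro y
    have h1 := (((hasDerivAt_id y).sub ((hasDerivAt_pow 3 y).div_const 6)).add ((hasDerivAt_pow 5 y).div_const 120)).sub (Real.hasDerivAt_sin y)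
    refine h1.congr_deriv ?_
    simp
    ring
  · intro y hy
    have hb := cos_ub4 (le_of_lt hy)
    nlinarith [hy.le]

lemma cos_lb6 {x : ℝ} (hx : 0 ≤ x) : 1 - x^2/2 + x^4/24 - x^6/720 ≤ Real.cos x := by
  have h := mono_aux (f := fun x => Real.cos x - (1 - x^2/2 + x^4/24 - x^6/720))
    (f' := fun x => (x - x^3/6 + x^5/120) - Real.sin x) ?_ ?_ (by norm_num) hx
  · linarith
  · intro y
    have h1 := (Real.hasDerivAt_cos y).sub ((((hasDerivAt_const y (1:ℝ)).sub ((hasDerivAt_pow 2 y).div_const 2)).add ((hasDerivAt_pow 4 y).div_const 24)).sub ((hasDerivAt_pow 6 y).div_const 720))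
    refine h1.congr_deriv ?_
    simp
    ring
  · intro y hy
    have hb := sin_ub5 (le_of_lt hy)
    nlinarith [hy.le]

lemma sin_lb7 {x : ℝ} (hx : 0 ≤ x) : x - x^3/6 + x^5/120 - x^7/5040 ≤ Real.sin x := by
  have h := mono_aux (f := fun x => Real.sin x - (x - x^3/6 + x^5/120 - x^7/5040))
    (f' := fun x => Real.cos x - (1 - x^2/2 + x^4/24 - x^6/720)) ?_ ?_ (by norm_num) hx
  · linarith
  · intro y
    have h1 := (Real.hasDerivAt_sin y).sub ((((hasDerivAt_id y).sub ((hasDerivAt_pow 3 y).div_const 6)).add ((hasDerivAt_pow 5 y).div_const 120)).sub ((hasDerivAt_pow 7 y).div_const 5040))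
    refine h1.congr_deriv ?_
    simp
    ring
  · intro y hy
    have hb := cos_lb6 (le_of_lt hy)
    nlinarith [hy.le]

lemma cos_ub8 {x : ℝ} (hx : 0 ≤ x) : Real.cos x ≤ 1 - x^2/2 + x^4/24 - x^6/720 + x^8/40320 := by
  have h := mono_aux (f := fun x => (1 - x^2/2 + x^4/24 - x^6/720 + x^8/40320) - Real.cos x)
    (f' := fun x => Real.sin x - (x - x^3/6 + x^5/120 - x^7/5040)) ?_ ?_ (by norm_num) hx
  · linarith
  · intro y
    have h1 := (((((hasDerivAt_const y (1:ℝ)).sub ((hasDerivAt_pow 2 y).div_const 2)).add ((hasDerivAt_pow 4 y).div_const 24)).sub ((hasDerivAt_pow 6 y).div_const 720)).add ((hasDerivAt_pow 8 y).div_const 40320)).sub (Real.hasDerivAt_cos y)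
    refine h1.congr_deriv ?_
    simp
    ring
  · intro y hy
    have hb := sin_lb7 (le_of_lt hy)
    nlinarith [hy.le]

lemma sin_ub9 {x : ℝ} (hx : 0 ≤ x) : Real.sin x ≤ x - x^3/6 + x^5/120 - x^7/5040 + x^9/362880 := by
  have h := mono_aux (f := fun x => (x - x^3/6 + x^5/120 - x^7/5040 + x^9/362880) - Real.sin x)
    (f' := fun x => (1 - x^2/2 + x^4/24 - x^6/720 + x^8/40320) - Real.cos x) ?_ ?_ (by norm_num) hx
  · linarith
  · intro y
    have h1 := (((((hasDerivAt_id y).sub ((hasDerivAt_pow 3 y).div_const 6)).add ((hasDerivAt_pow 5 y).div_const 120)).sub ((hasDerivAt_pow 7 y).div_const 5040)).add ((hasDerivAt_pow 9 y).div_const 362880)).sub (Real.hasDerivAt_sin y)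
    refine h1.congr_deriv ?_
    simp
    ring
  · intro y hy
    have hb := cos_ub8 (le_of_lt hy)
    nlinarith [hy.le]

lemma cos_lb10 {x : ℝ} (hx : 0 ≤ x) : 1 - x^2/2 + x^4/24 - x^6/720 + x^8/40320 - x^10/3628800 ≤ Real.cos x := by
  have h := mono_aux (f := fun x => Real.cos x - (1 - x^2/2 + x^4/24 - x^6/720 + x^8/40320 - x^10/3628800))
    (f' := fun x => (x - x^3/6 + x^5/120 - x^7/5040 + x^9/362880) - Real.sin x) ?_ ?_ (by norm_num) hx
  · linarith
  · intro y
    have h1 := (Real.hasDerivAt_cos y).sub ((((((hasDerivAt_const y (1:ℝ)).sub ((hasDerivAt_pow 2 y).div_const 2)).add ((hasDerivAt_pow 4 y).div_const 24)).sub ((hasDerivAt_pow 6 y).div_const 720)).add ((hasDerivAt_pow 8 y).div_const 40320)).sub ((hasDerivAt_pow 10 y).div_const 3628800))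
    refine h1.congr_deriv ?_
    simp
    ring
  · intro y hy
    have hb := sin_ub9 (le_of_lt hy)
    nlinarith [hy.le]

lemma sin_lb11 {x : ℝ} (hx : 0 ≤ x) : x - x^3/6 + x^5/120 - x^7/5040 + x^9/362880 - x^11/39916800 ≤ Real.sin x := by
  have h := mono_aux (f := fun x => Real.sin x - (x - x^3/6 + x^5/120 - x^7/5040 + x^9/362880 - x^11/39916800))
    (f' := fun x => Real.cos x - (1 - x^2/2 + x^4/24 - x^6/720 + x^8/40320 - x^10/3628800)) ?_ ?_ (by norm_num) hx
  · linarith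
  · intro y
    have h1 := (Real.hasDerivAt_sin y).sub ((((((hasDerivAt_id y).sub ((hasDerivAt_pow 3 y).div_const 6)).add ((hasDerivAt_pow 5 y).div_const 120)).sub ((hasDerivAt_pow 7 y).div_const 5040)).add ((hasDerivAt_pow 9 y).div_const 362880)).sub ((hasDerivAt_pow 11 y).div_const 39916800))
    refine h1.congr_deriv ?_
    simp
    ring
  · intro y hy
    have hb := cos_lb10 (le_of_lt hy)
    nlinarith [hy.le]

lemma cos_ub12 {x : ℝ} (hx : 0 ≤ x) : Real.cos x ≤ 1 - x^2/2 + x^4/24 - x^6/720 + x^8/40320 - x^10/3628800 + x^12/479001600 := by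
  have h := mono_aux (f := fun x => (1 - x^2/2 + x^4/24 - x^6/720 + x^8/40320 - x^10/3628800 + x^12/479001600) - Real.cos x)
    (f' := fun x => Real.sin x - (x - x^3/6 + x^5/120 - x^7/5040 + x^9/362880 - x^11/39916800)) ?_ ?_ (by norm_num) hx
  · linarith
  · intro y
    have h1 := (((((((hasDerivAt_const y (1:ℝ)).sub ((hasDerivAt_pow 2 y).div_const 2)).add ((hasDerivAt_pow 4 y).div_const 24)).sub ((hasDerivAt_pow 6 y).div_const 720)).add ((hasDerivAt_pow 8 y).div_const 40320)).sub ((hasDerivAt_pow 10 y).div_const 3628800)).add ((hasDerivAt_pow 12 y).div_const 479001600)).sub (Real.hasDerivAt_cos y)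
    refine h1.congr_deriv ?_
    simp
    ring
  · intro y hy
    have hb := sin_lb11 (le_of_lt hy)
    nlinarith [hy.le]

lemma sin_ub13 {x : ℝ} (hx : 0 ≤ x) : Real.sin x ≤ x - x^3/6 + x^5/120 - x^7/5040 + x^9/362880 - x^11/39916800 + x^13/6227020800 := by
  have h := mono_aux (f := fun x => (x - x^3/6 + x^5/120 - x^7/5040 + x^9/362880 - x^11/39916800 + x^13/6227020800) - Real.sin x)
    (f' := fun x => (1 - x^2/2 + x^4/24 - x^6/720 + x^8/40320 - x^10/3628800 + x^12/479001600) - Real.cos x) ?_ ?_ (by norm_num) hx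
  · linarith
  · intro y
    have h1 := (((((((hasDerivAt_id y).sub ((hasDerivAt_pow 3 y).div_const 6)).add ((hasDerivAt_pow 5 y).div_const 120)).sub ((hasDerivAt_pow 7 y).div_const 5040)).add ((hasDerivAt_pow 9 y).div_const 362880)).sub ((hasDerivAt_pow 11 y).div_const 39916800)).add ((hasDerivAt_pow 13 y).div_const 6227020800)).sub (Real.hasDerivAt_sin y)
    refine h1.congr_deriv ?_
    simp
    ring
  · intro y hy
    have hb := cos_ub12 (le_of_lt hy)
    nlinarith [hy.le]

lemma cos_lb14 {x : ℝ} (hx : 0 ≤ x) : 1 - x^2/2 + x^4/24 - x^6/720 + x^8/40320 - x^10/3628800 + x^12/479001600 - x^14/87178291200 ≤ Real.cos x := by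
  have h := mono_aux (f := fun x => Real.cos x - (1 - x^2/2 + x^4/24 - x^6/720 + x^8/40320 - x^10/3628800 + x^12/479001600 - x^14/87178291200))
    (f' := fun x => (x - x^3/6 + x^5/120 - x^7/5040 + x^9/362880 - x^11/39916800 + x^13/6227020800) - Real.sin x) ?_ ?_ (by norm_num) hx
  · linarith
  · intro y
    have h1 := (Real.hasDerivAt_cos y).sub ((((((((hasDerivAt_const y (1:ℝ)).sub ((hasDerivAt_pow 2 y).div_const 2)).add ((hasDerivAt_pow 4 y).div_const 24)).sub ((hasDerivAt_pow 6 y).div_const 720)).add ((hasDerivAt_pow 8 y).div_const 40320)).sub ((hasDerivAt_pow 10 y).div_const 3628800)).add ((hasDerivAt_pow 12 y).div_const 479001600)).sub ((hasDerivAt_pow 14 y).div_const 87178291200))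
    refine h1.congr_deriv ?_
    simp
    ring
  · intro y hy
    have hb := sin_ub13 (le_of_lt hy)
    nlinarith [hy.le]

lemma sin_lb15 {x : ℝ} (hx : 0 ≤ x) : x - x^3/6 + x^5/120 - x^7/5040 + x^9/362880 - x^11/39916800 + x^13/6227020800 - x^15/1307674368000 ≤ Real.sin x := by
  have h := mono_aux (f := fun x => Real.sin x - (x - x^3/6 + x^5/120 - x^7/5040 + x^9/362880 - x^11/39916800 + x^13/6227020800 - x^15/1307674368000))
    (f' := fun x => Real.cos x - (1 - x^2/2 + x^4/24 - x^6/720 + x^8/40320 - x^10/3628800 + x^12/479001600 - x^14/87178291200)) ?_ ?_ (by norm_num) hx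
  · linarith
  · intro y
    have h1 := (Real.hasDerivAt_sin y).sub ((((((((hasDerivAt_id y).sub ((hasDerivAt_pow 3 y).div_const 6)).add ((hasDerivAt_pow 5 y).div_const 120)).sub ((hasDerivAt_pow 7 y).div_const 5040)).add ((hasDerivAt_pow 9 y).div_const 362880)).sub ((hasDerivAt_pow 11 y).div_const 39916800)).add ((hasDerivAt_pow 13 y).div_const 6227020800)).sub ((hasDerivAt_pow 15 y).div_const 1307674368000))
    refine h1.congr_deriv ?_
    simp
    ring
  · intro y hy
    have hb := cos_lb14 (le_of_lt hy)
    nlinarith [hy.le]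


lemma piece0 {u : ℝ} (h0 : 0 ≤ u) (hw : u ≤ (27/20 : ℝ)) :
    0 ≤ (60761720125832113424/97429332733154296875 : ℝ) + (14029914294656185196/19485866546630859375 : ℝ) * u^1 + (-37275480143215988/259811553955078125 : ℝ) * u^2 + (-2365624021182694/22269561767578125 : ℝ) * u^3 + (-46796260465247/2740869140625000 : ℝ) * u^4 + (1289271361241/114202880859375 : ℝ) * u^5 + (76583133491/49833984375000 : ℝ) * u^6 + (-2868324121/6976757812500 : ℝ) * u^7 + (-221875921/4961250000000 : ℝ) * u^8 + (4290313/558140625000 : ℝ) * u^9 + (439363/637875000000 : ℝ) * u^10 + (-41131/467775000000 : ℝ) * u^11 + (-6031/898128000000 : ℝ) * u^12 + (193/291891600000 : ℝ) * u^13 + (43/1089728640000 : ℝ) * u^14 + (-1/204324120000 : ℝ) * u^15 + (-1/2615348736000 : ℝ) * u^16 := by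
  nlinarith [pow_nonneg h0 1, pow_le_pow_left₀ h0 hw 2, pow_le_pow_left₀ h0 hw 3, pow_le_pow_left₀ h0 hw 4, pow_nonneg h0 5, pow_nonneg h0 6, pow_le_pow_left₀ h0 hw 7, pow_le_pow_left₀ h0 hw 8, pow_nonneg h0 9, pow_nonneg h0 10, pow_le_pow_left₀ h0 hw 11, pow_le_pow_left₀ h0 hw 12, pow_nonneg h0 13, pow_nonneg h0 14, pow_le_pow_left₀ h0 hw 15, pow_le_pow_left₀ h0 hw 16]
lemma piece1 {u : ℝ} (h0 : 0 ≤ u) (hw : u ≤ (13/10 : ℝ)) :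
    0 ≤ (1837931391535169499550273762012799/1713994947624960000000000000000000 : ℝ) + (-1107985091303903799550723605307/5356234211328000000000000000000 : ℝ) * u^1 + (-16062753567524842364509870849/35708228075520000000000000000 : ℝ) * u^2 + (10837201385163656823902357/382588157952000000000000000 : ℝ) * u^3 + (354874906154017845683999/5885971660800000000000000 : ℝ) * u^4 + (97340238520334370899/17517772800000000000000 : ℝ) * u^5 + (-1323866864730579607/477757440000000000000 : ℝ) * u^6 + (-35008860255225643/117050572800000000000 : ℝ) * u^7 + (325907010945599/5202247680000000000 : ℝ) * u^8 + (1836939770693/292626432000000000 : ℝ) * u^9 + (-19076154049/20901888000000000 : ℝ) * u^10 + (-185966443/1916006400000000 : ℝ) * u^11 + (119657/32845824000000 : ℝ) * u^12 + (-301/5337446400000 : ℝ) * u^13 + (-1249/8717829120000 : ℝ) * u^14 + (-43/3269185920000 : ℝ) * u^15 + (-1/2615348736000 : ℝ) * u^16 := by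
  nlinarith [pow_le_pow_left₀ h0 hw 1, pow_le_pow_left₀ h0 hw 2, pow_nonneg h0 3, pow_nonneg h0 4, pow_nonneg h0 5, pow_le_pow_left₀ h0 hw 6, pow_le_pow_left₀ h0 hw 7, pow_nonneg h0 8, pow_nonneg h0 9, pow_le_pow_left₀ h0 hw 10, pow_le_pow_left₀ h0 hw 11, pow_nonneg h0 12, pow_le_pow_left₀ h0 hw 13, pow_le_pow_left₀ h0 hw 14, pow_le_pow_left₀ h0 hw 15, pow_le_pow_left₀ h0 hw 16]
lemma piece2 {u : ℝ} (h0 : 0 ≤ u) (hw : u ≤ (2/5 : ℝ)) :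
    0 ≤ (666665594862412564217318629911/2351159050240000000000000000000 : ℝ) + (-5084087707039224644226159581/7347372032000000000000000000 : ℝ) * u^1 + (38432148586121821265383653/146947440640000000000000000 : ℝ) * u^2 + (156842462455491813248179/524812288000000000000000 : ℝ) * u^3 + (424223472976837155173/24222105600000000000000 : ℝ) * u^4 + (-1280435734143521969/72089600000000000000 : ℝ) * u^5 + (-12222762852743303/5898240000000000000 : ℝ) * u^6 + (65620752706099/160563200000000000 : ℝ) * u^7 + (6499805827117/192675840000000000 : ℝ) * u^8 + (-155777565007/10838016000000000 : ℝ) * u^9 + (-5807786009/2322432000000000 : ℝ) * u^10 + (-46775261/212889600000000 : ℝ) * u^11 + (-377501/10948608000000 : ℝ) * u^12 + (-1081/197683200000 : ℝ) * u^13 + (-1387/2905943040000 : ℝ) * u^14 + (-23/1089728640000 : ℝ) * u^15 + (-1/2615348736000 : ℝ) * u^16 := by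
  nlinarith [pow_le_pow_left₀ h0 hw 1, pow_nonneg h0 2, pow_nonneg h0 3, pow_nonneg h0 4, pow_le_pow_left₀ h0 hw 5, pow_le_pow_left₀ h0 hw 6, pow_nonneg h0 7, pow_nonneg h0 8, pow_le_pow_left₀ h0 hw 9, pow_le_pow_left₀ h0 hw 10, pow_le_pow_left₀ h0 hw 11, pow_le_pow_left₀ h0 hw 12, pow_le_pow_left₀ h0 hw 13, pow_le_pow_left₀ h0 hw 14, pow_le_pow_left₀ h0 hw 15, pow_le_pow_left₀ h0 hw 16]
lemma piece3 {u : ℝ} (h0 : 0 ≤ u) (hw : u ≤ (3/20 : ℝ)) :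
    0 ≤ (216220489000433115245187672301/3179953520640000000000000000000 : ℝ) + (-3350734355338751724650500087/9937354752000000000000000000 : ℝ) * u^1 + (41399211653015367991262269/66249031680000000000000000 : ℝ) * u^2 + (1471649873232986970725279/4968677376000000000000000 : ℝ) * u^3 + (-1683840175336592544773/76441190400000000000000 : ℝ) * u^4 + (-33911789538320727649/1592524800000000000000 : ℝ) * u^5 + (-415031935893544807/477757440000000000000 : ℝ) * u^6 + (985299794245987/2388787200000000000 : ℝ) * u^7 + (-28872387721783/743178240000000000 : ℝ) * u^8 + (-160678671197/5971968000000000 : ℝ) * u^9 + (-82449011089/20901888000000000 : ℝ) * u^10 + (-11579041/24883200000000 : ℝ) * u^11 + (-16208641/229920768000000 : ℝ) * u^12 + (-4129/485222400000 : ℝ) * u^13 + (-5329/8717829120000 : ℝ) * u^14 + (-1/42456960000 : ℝ) * u^15 + (-1/2615348736000 : ℝ) * u^16 := by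
  nlinarith [pow_le_pow_left₀ h0 hw 1, pow_nonneg h0 2, pow_nonneg h0 3, pow_le_pow_left₀ h0 hw 4, pow_le_pow_left₀ h0 hw 5, pow_le_pow_left₀ h0 hw 6, pow_nonneg h0 7, pow_le_pow_left₀ h0 hw 8, pow_le_pow_left₀ h0 hw 9, pow_le_pow_left₀ h0 hw 10, pow_le_pow_left₀ h0 hw 11, pow_le_pow_left₀ h0 hw 12, pow_le_pow_left₀ h0 hw 13, pow_le_pow_left₀ h0 hw 14, pow_le_pow_left₀ h0 hw 15, pow_le_pow_left₀ h0 hw 16]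
lemma piece4 {u : ℝ} (h0 : 0 ≤ u) (hw : u ≤ (1/5 : ℝ)) :
    0 ≤ (20728784/638512875 : ℝ) + (-83053924/638512875 : ℝ) * u^1 + (32116684/42567525 : ℝ) * u^2 + (5073914/18243225 : ℝ) * u^3 + (-61337/1603800 : ℝ) * u^4 + (-51199/2338875 : ℝ) * u^5 + (-2389/5103000 : ℝ) * u^6 + (1223/3572100 : ℝ) * u^7 + (-1009/12700800 : ℝ) * u^8 + (-239/7144200 : ℝ) * u^9 + (-197/40824000 : ℝ) * u^10 + (-13/21384000 : ℝ) * u^11 + (-127/1437004800 : ℝ) * u^12 + (-23/2335132800 : ℝ) * u^13 + (-29/43589145600 : ℝ) * u^14 + (-1/40864824000 : ℝ) * u^15 + (-1/2615348736000 : ℝ) * u^16 := by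
  nlinarith [pow_le_pow_left₀ h0 hw 1, pow_nonneg h0 2, pow_nonneg h0 3, pow_le_pow_left₀ h0 hw 4, pow_le_pow_left₀ h0 hw 5, pow_le_pow_left₀ h0 hw 6, pow_nonneg h0 7, pow_le_pow_left₀ h0 hw 8, pow_le_pow_left₀ h0 hw 9, pow_le_pow_left₀ h0 hw 10, pow_le_pow_left₀ h0 hw 11, pow_le_pow_left₀ h0 hw 12, pow_le_pow_left₀ h0 hw 13, pow_le_pow_left₀ h0 hw 14, pow_le_pow_left₀ h0 hw 15, pow_le_pow_left₀ h0 hw 16]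
lemma piece5 {u : ℝ} (h0 : 0 ≤ u) (hw : u ≤ (4/5 : ℝ)) :
    0 ≤ (433308569055201399/11171875000000000000 : ℝ) + (56891816572259663/279296875000000000 : ℝ) * u^1 + (20342295543256659/22343750000000000 : ℝ) * u^2 + (266691180265013/1117187500000000 : ℝ) * u^3 + (-12443181075091/206250000000000 : ℝ) * u^4 + (-763378466417/34375000000000 : ℝ) * u^5 + (-1147553881/11250000000000 : ℝ) * u^6 + (2026439/12500000000 : ℝ) * u^7 + (-62673749/420000000000 : ℝ) * u^8 + (-1204459/27000000000 : ℝ) * u^9 + (-7280263/1134000000000 : ℝ) * u^10 + (-25327/29700000000 : ℝ) * u^11 + (-34877/299376000000 : ℝ) * u^12 + (-73/6177600000 : ℝ) * u^13 + (-269/363242880000 : ℝ) * u^14 + (-1/38918880000 : ℝ) * u^15 + (-1/2615348736000 : ℝ) * u^16 := by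
  nlinarith [pow_nonneg h0 1, pow_nonneg h0 2, pow_nonneg h0 3, pow_le_pow_left₀ h0 hw 4, pow_le_pow_left₀ h0 hw 5, pow_le_pow_left₀ h0 hw 6, pow_nonneg h0 7, pow_le_pow_left₀ h0 hw 8, pow_le_pow_left₀ h0 hw 9, pow_le_pow_left₀ h0 hw 10, pow_le_pow_left₀ h0 hw 11, pow_le_pow_left₀ h0 hw 12, pow_le_pow_left₀ h0 hw 13, pow_le_pow_left₀ h0 hw 14, pow_le_pow_left₀ h0 hw 15, pow_le_pow_left₀ h0 hw 16]
lemma piece6 {u : ℝ} (h0 : 0 ≤ u) (hw : u ≤ (13/10 : ℝ)) :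
    0 ≤ (18299586427/20922789888 : ℝ) + (25492369319/13076743680 : ℝ) * u^1 + (1982389225/1743565824 : ℝ) * u^2 + (-18512645/186810624 : ℝ) * u^3 + (-8839183/57480192 : ℝ) * u^4 + (-265889/9580032 : ℝ) * u^5 + (-117599/26127360 : ℝ) * u^6 + (-21641/9144576 : ℝ) * u^7 + (-30749/40642560 : ℝ) * u^8 + (-2617/18289152 : ℝ) * u^9 + (-2731/130636800 : ℝ) * u^10 + (-13/4790016 : ℝ) * u^11 + (-83/287400960 : ℝ) * u^12 + (-41/1868106240 : ℝ) * u^13 + (-47/43589145600 : ℝ) * u^14 + (-1/32691859200 : ℝ) * u^15 + (-1/2615348736000 : ℝ) * u^16 := by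
  nlinarith [pow_nonneg h0 1, pow_nonneg h0 2, pow_le_pow_left₀ h0 hw 3, pow_le_pow_left₀ h0 hw 4, pow_le_pow_left₀ h0 hw 5, pow_le_pow_left₀ h0 hw 6, pow_le_pow_left₀ h0 hw 7, pow_le_pow_left₀ h0 hw 8, pow_le_pow_left₀ h0 hw 9, pow_le_pow_left₀ h0 hw 10, pow_le_pow_left₀ h0 hw 11, pow_le_pow_left₀ h0 hw 12, pow_le_pow_left₀ h0 hw 13, pow_le_pow_left₀ h0 hw 14, pow_le_pow_left₀ h0 hw 15, pow_le_pow_left₀ h0 hw 16]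
lemma piece7 {u : ℝ} (h0 : 0 ≤ u) (hw : u ≤ (9/20 : ℝ)) :
    0 ≤ (3313612506935723631422679/732160000000000000000000 : ℝ) + (11092158494984572694483/4576000000000000000000 : ℝ) * u^1 + (-355109147483646980277/183040000000000000000 : ℝ) * u^2 + (-18648327342045212301/9152000000000000000 : ℝ) * u^3 + (-740565544827026881/844800000000000000 : ℝ) * u^4 + (-11219263351860837/35200000000000000 : ℝ) * u^5 + (-616268082997397/5760000000000000 : ℝ) * u^6 + (-179621289663/6400000000000 : ℝ) * u^7 + (-595066886189/107520000000000 : ℝ) * u^8 + (-495538493/576000000000 : ℝ) * u^9 + (-3961065551/36288000000000 : ℝ) * u^10 + (-3516487/316800000000 : ℝ) * u^11 + (-4110287/4790016000000 : ℝ) * u^12 + (-391/8236800000 : ℝ) * u^13 + (-1273/726485760000 : ℝ) * u^14 + (-1/25945920000 : ℝ) * u^15 + (-1/2615348736000 : ℝ) * u^16 := by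
  nlinarith [pow_nonneg h0 1, pow_le_pow_left₀ h0 hw 2, pow_le_pow_left₀ h0 hw 3, pow_le_pow_left₀ h0 hw 4, pow_le_pow_left₀ h0 hw 5, pow_le_pow_left₀ h0 hw 6, pow_le_pow_left₀ h0 hw 7, pow_le_pow_left₀ h0 hw 8, pow_le_pow_left₀ h0 hw 9, pow_le_pow_left₀ h0 hw 10, pow_le_pow_left₀ h0 hw 11, pow_le_pow_left₀ h0 hw 12, pow_le_pow_left₀ h0 hw 13, pow_le_pow_left₀ h0 hw 14, pow_le_pow_left₀ h0 hw 15, pow_le_pow_left₀ h0 hw 16]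
lemma poly_ineq {t : ℝ} (h1 : 4/5 ≤ t) (h2 : t ≤ 20/3) :
    1 - (1 - t^2/2 + t^4/24 - t^6/720 + t^8/40320 - t^10/3628800 + t^12/479001600 - t^14/87178291200) - t/2 * (t - t^3/6 + t^5/120 - t^7/5040 + t^9/362880 - t^11/39916800 + t^13/6227020800 - t^15/1307674368000) ≤ 4/5 * t := by
  by_cases hc0 : t ≤ (43/20 : ℝ)
  · have h := piece0 (u := t - (4/5 : ℝ)) (by linarith) (by linarith)
    ring_nf at h ⊢
    linarith
  by_cases hc1 : t ≤ (69/20 : ℝ)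
  · have h := piece1 (u := t - (43/20 : ℝ)) (by linarith) (by linarith)
    ring_nf at h ⊢
    linarith
  by_cases hc2 : t ≤ (77/20 : ℝ)
  · have h := piece2 (u := t - (69/20 : ℝ)) (by linarith) (by linarith)
    ring_nf at h ⊢
    linarith
  by_cases hc3 : t ≤ (4 : ℝ)
  · have h := piece3 (u := t - (77/20 : ℝ)) (by linarith) (by linarith)
    ring_nf at h ⊢
    linarith
  by_cases hc4 : t ≤ (21/5 : ℝ)
  · have h := piece4 (u := t - (4 : ℝ)) (by linarith) (by linarith)
    ring_nf at h ⊢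
    linarith
  by_cases hc5 : t ≤ (5 : ℝ)
  · have h := piece5 (u := t - (21/5 : ℝ)) (by linarith) (by linarith)
    ring_nf at h ⊢
    linarith
  by_cases hc6 : t ≤ (63/10 : ℝ)
  · have h := piece6 (u := t - (5 : ℝ)) (by linarith) (by linarith)
    ring_nf at h ⊢
    linarith
  by_cases hc7 : t ≤ (27/4 : ℝ)
  · have h := piece7 (u := t - (63/10 : ℝ)) (by linarith) (by linarith)
    ring_nf at h ⊢
    linarith
  linarith

lemma key_pos (w : ℝ) (hw : 0 < w) :
    |Real.sin (2 * w) / 2 - Real.sin w ^ 2 / w| ≤ 4 / 5 := by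
  have hsq : (0:ℝ) ≤ Real.sin w ^ 2 / w := div_nonneg (sq_nonneg _) hw.le
  have hs1 := Real.sin_le_one (2 * w)
  have hs2 := Real.neg_one_le_sin (2 * w)
  rw [abs_le]
  constructor
  · -- need sin w^2 / w - sin(2w)/2 ≤ 4/5
    rw [neg_le, neg_sub]
    rcases le_or_gt w (2/5) with hle | hgt
    · -- small w
      have h1 : Real.sin w ^ 2 ≤ w ^ 2 := Real.sin_sq_le_sq
      have h2 : Real.sin w ^ 2 / w ≤ w := by
        rw [div_le_iff₀ hw]; nlinarith
      have h3 : -(2*w) ≤ Real.sin (2*w) := by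
        have h4 : |Real.sin (2*w)| ≤ |2*w| := Real.abs_sin_le_abs
        rw [abs_of_pos (show (0:ℝ) < 2*w by linarith)] at h4
        linarith [(abs_le.mp h4).1]
      linarith
    rcases le_or_gt (10/3) w with hge | hlt
    · -- large w
      have h1 : Real.sin w ^ 2 ≤ 1 := Real.sin_sq_le_one w
      have h2 : Real.sin w ^ 2 / w ≤ 3/10 := by
        rw [div_le_iff₀ hw]; nlinarith
      linarith
    · -- middle: use polynomial bound with t = 2w
      have ht0 : (0:ℝ) ≤ 2 * w := by linarith
      have hc := cos_lb14 ht0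
      have hs := sin_lb15 ht0
      have hmul : (2*w/2) * ((2*w) - (2*w)^3/6 + (2*w)^5/120 - (2*w)^7/5040 + (2*w)^9/362880 - (2*w)^11/39916800 + (2*w)^13/6227020800 - (2*w)^15/1307674368000) ≤ (2*w/2) * Real.sin (2*w) :=
        mul_le_mul_of_nonneg_left hs (by linarith)
      have hp := poly_ineq (t := 2*w) (by linarith) (by linarith)
      have hkey : 1 - Real.cos (2*w) - w * Real.sin (2*w) ≤ 8/5 * w := by nlinarith
      have hsin2 : Real.sin w ^ 2 = (1 - Real.cos (2*w)) / 2 := by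
        have := Real.cos_two_mul w
        have hpy := Real.sin_sq_add_cos_sq w
        nlinarith
      have h2 : Real.sin w ^ 2 / w ≤ 4/5 + Real.sin (2*w) / 2 := by
        rw [div_le_iff₀ hw]; nlinarith
      linarith
  · -- sin(2w)/2 - sin w^2/w ≤ 4/5
    linarith

theorem sin_combination_bound (v : ℝ) (hv : v ≠ 0) :
    |Real.sin (2 * v) / 2 - Real.sin v ^ 2 / v| ≤ 4 / 5 := by
  rcases lt_or_gt_of_ne hv with hneg | hpos
  · have h := key_pos (-v) (by linarith)
    have he : Real.sin (2 * -v) / 2 - Real.sin (-v) ^ 2 / (-v)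
        = -(Real.sin (2 * v) / 2 - Real.sin v ^ 2 / v) := by
      rw [show (2 : ℝ) * -v = -(2*v) by ring, Real.sin_neg, Real.sin_neg]
      ring
    rw [he, abs_neg] at h
    exact h
  · exact key_pos v hpos
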